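/- arXiv:1511.03018 — 5 statements merged into one kernel-verified Lean document; each statement's English description precedes it below -/
import Mathlib

section
/- Let 𝒢 be a groupoid with object set M, and let Σ = (u, σ) and T = (v, τ) be bisections of 𝒢. Define the conjugation by Σ on arrows by c_Σ(γ) := inv(σ m) ≫ γ ≫ σ n for every arrow γ : m ⟶ n (so c_Σ(γ) : u(m) ⟶ u(n)), and define the bisection Σ▷T to consist of the bijection u ∘ v ∘ u⁻¹ together with the arrow c_Σ(τ(m)) : u(m) ⟶ u(v(m)) at the object u(m). Then the self-distributivity law holds: for every arrow γ of 𝒢, c_Σ(c_T(γ)) = c_{Σ▷T}(c_Σ(γ)). (Conjugation in a Lie groupoid gives a rackoid structure.) -/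
open CategoryTheory

/-- A bisection of a groupoid `𝒢` with object set `M`: a bijection `u : M ≃ M`
together with, for each object `m`, an arrow `σ m : m ⟶ u m`. -/
structure GroupoidBisection (M : Type*) [Groupoid M] where
  u : M ≃ M
  σ : ∀ m : M, m ⟶ u m

namespace GroupoidBisection

variable {M : Type*} [Groupoid M]

/-- Conjugation of an arrow `γ : m ⟶ n` by a bisection:
`c_Σ(γ) := inv (σ m) ≫ γ ≫ σ n : u m ⟶ u n`. -/
def conj (S : GroupoidBisection M) {m n : M} (γ : m ⟶ n) : S.u m ⟶ S.u n :=
  Groupoid.inv (S.σ m) ≫ γ ≫ S.σ n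

/-- The bisection `Σ ▷ T`, consisting of the bijection `u ∘ v ∘ u⁻¹` together with
the arrow `c_Σ(τ m) : u m ⟶ u (v m)` at the object `u m`. -/
def act (S T : GroupoidBisection M) : GroupoidBisection M where
  u := S.u.symm.trans (T.u.trans S.u)
  σ := fun m => eqToHom (S.u.apply_symm_apply m).symm ≫ S.conj (T.σ (S.u.symm m))

end GroupoidBisection

/-- Self-distributivity of conjugation by bisections in a groupoid:
`c_Σ(c_T(γ)) = c_{Σ▷T}(c_Σ(γ))` for every arrow `γ`. -/
theorem groupoid_conj_self_distrib {M : Type*} [Groupoid M]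
    (S T : GroupoidBisection M) {m n : M} (γ : m ⟶ n) :
    HEq (S.conj (T.conj γ)) ((S.act T).conj (S.conj γ)) := by
  refine (conj_eqToHom_iff_heq _ _
    (congrArg S.u (congrArg T.u (S.u.symm_apply_apply m))).symm
    (congrArg S.u (congrArg T.u (S.u.symm_apply_apply n))).symm).1 ?_
  simp [GroupoidBisection.conj, GroupoidBisection.act, Groupoid.inv_eq_inv, eqToHom_map]
end

section
/- Let Γ, M be sets with s, t : Γ → M, let B be the set of bisections (maps σ : M → Γ with s ∘ σ = id_M and t ∘ σ bijective), and let ▷ : B × Γ → Γ be an operation such that: s(σ ▷ γ) = u_σ(s(γ)) and t(σ ▷ γ) = u_σ(t(γ)) where u_σ = t ∘ σ; each σ ▷ – is a bijection of Γ; and σ ▷ (τ ▷ γ) = (σ ▷ τ) ▷ (σ ▷ γ) for all bisections σ, τ and γ ∈ Γ, where σ ▷ τ denotes the bisection m ↦ σ ▷ (τ(u_σ⁻¹(m))). Fix m ∈ M with Γ_m^m := s⁻¹(m) ∩ t⁻¹(m) nonempty, assume every γ' ∈ Γ_m^m equals σ(m) for some bisection σ, and assume σ₁ ▷ γ = σ₂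 ▷ γ for all γ ∈ Γ and all bisections σ₁, σ₂ with σ₁(m) = σ₂(m) ∈ Γ_m^m. Then Γ_m^m carries a well-defined operation γ' ⊳ γ := σ ▷ γ (for any bisection σ with σ(m) = γ'), this operation maps Γ_m^m × Γ_m^m to Γ_m^m, each left translation γ' ⊳ – is a bijection of Γ_m^m, and ⊳ is self-distributive; i.e. the isotropy set Γ_m^m becomes a rack. -/
/-- A bisection of `s, t : Γ → M`: a right inverse `σ` of `s` such that `t ∘ σ`
is a bijection of `M`. -/
def IsBisection {Γ M : Type*} (s t : Γ → M) (σ : M → Γ) : Prop :=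
  s ∘ σ = id ∧ Function.Bijective (t ∘ σ)

/-- The isotropy set of a rackoid becomes a rack: given a rackoid product `▷` of
bisections on `Γ` (compatible with `s, t`, bijective, and self-distributive), a
point `m` with `Γₘᵐ := s⁻¹(m) ∩ t⁻¹(m)` nonempty, a bisection through every point
of `Γₘᵐ`, and independence of `σ ▷ γ` on the choice of bisection `σ` through a
given point of `Γₘᵐ`, there is a well-defined operation `γ' ⊳ γ := σ ▷ γ` on
`Γₘᵐ` whose left translations are bijections and which is self-distributive. -/
theorem rackoid_isotropy_rack {Γ M : Type*} (s t : Γ → M)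
    (act : {σ : M → Γ // IsBisection s t σ} → Γ → Γ)
    (compat_s : ∀ (σ : {σ : M → Γ // IsBisection s t σ}) (γ : Γ),
      s (act σ γ) = t (σ.1 (s γ)))
    (compat_t : ∀ (σ : {σ : M → Γ // IsBisection s t σ}) (γ : Γ),
      t (act σ γ) = t (σ.1 (t γ)))
    (bij : ∀ σ : {σ : M → Γ // IsBisection s t σ}, Function.Bijective (act σ))
    (selfdist : ∀ σ τ ρ : {σ : M → Γ // IsBisection s t σ},
      (∀ m : M, ρ.1 m = act σ (τ.1 (@Function.invFun M M ⟨m⟩ (t ∘ σ.1) m))) →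
      ∀ γ : Γ, act σ (act τ γ) = act ρ (act σ γ))
    (m : M)
    (hne : ∃ γ : Γ, s γ = m ∧ t γ = m)
    (through : ∀ γ' : Γ, s γ' = m → t γ' = m →
      ∃ σ : {σ : M → Γ // IsBisection s t σ}, σ.1 m = γ')
    (indep : ∀ σ₁ σ₂ : {σ : M → Γ // IsBisection s t σ},
      σ₁.1 m = σ₂.1 m → s (σ₁.1 m) = m → t (σ₁.1 m) = m →
      ∀ γ : Γ, act σ₁ γ = act σ₂ γ) :
    ∃ op : {γ : Γ // s γ = m ∧ t γ = m} → {γ : Γ // s γ = m ∧ t γ = m} →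
        {γ : Γ // s γ = m ∧ t γ = m},
      (∀ (γ' γ : {γ : Γ // s γ = m ∧ t γ = m})
          (σ : {σ : M → Γ // IsBisection s t σ}),
        σ.1 m = γ'.1 → (op γ' γ).1 = act σ γ.1) ∧
      (∀ γ' : {γ : Γ // s γ = m ∧ t γ = m}, Function.Bijective (op γ')) ∧
      (∀ x y z : {γ : Γ // s γ = m ∧ t γ = m},
        op x (op y z) = op (op x y) (op x z)) := by
  classical
  haveI : Nonempty M := ⟨m⟩
  -- basic facts about bisections
  have hsid : ∀ (σ : {σ : M → Γ // IsBisection s t σ}) (m' : M), s (σ.1 m') = m' :=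
    fun σ m' => congrFun σ.2.1 m'
  have hinvfun : ∀ (σ : {σ : M → Γ // IsBisection s t σ}) (m' : M),
      t (σ.1 (@Function.invFun M M ⟨m'⟩ (t ∘ σ.1) m')) = m' := fun σ m' =>
    @Function.invFun_eq M M ⟨m'⟩ _ _ (σ.2.2.2 m')
  -- choose a bisection through each point of the isotropy set
  choose sig hsig using fun γ' : {γ : Γ // s γ = m ∧ t γ = m} =>
    through γ'.1 γ'.2.1 γ'.2.2
  have mem : ∀ (σ : {σ : M → Γ // IsBisection s t σ}), t (σ.1 m) = m →
      ∀ γ : {γ : Γ // s γ = m ∧ t γ = m},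
      s (act σ γ.1) = m ∧ t (act σ γ.1) = m := by
    intro σ hσ γ
    constructor
    · rw [compat_s, γ.2.1, hσ]
    · rw [compat_t, γ.2.2, hσ]
  have tsig : ∀ γ' : {γ : Γ // s γ = m ∧ t γ = m}, t ((sig γ').1 m) = m :=
    fun γ' => by rw [hsig]; exact γ'.2.2
  refine ⟨fun γ' γ => ⟨act (sig γ') γ.1, mem _ (tsig γ') γ⟩, ?_, ?_, ?_⟩
  · -- well-definedness
    intro γ' γ σ hσ
    exact indep (sig γ') σ (by rw [hsig, hσ]) (by rw [hsig]; exact γ'.2.1)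
      (by rw [hsig]; exact γ'.2.2) γ.1
  · -- bijectivity
    intro γ'
    constructor
    · intro a b hab
      exact Subtype.ext ((bij (sig γ')).1 (congrArg Subtype.val hab))
    · intro δ
      obtain ⟨γ, hγ⟩ := (bij (sig γ')).2 δ.1
      have hsγ : s γ = m := by
        have h := compat_s (sig γ') γ
        rw [hγ, δ.2.1] at h
        have h2 : t ((sig γ').1 (s γ)) = t ((sig γ').1 m) := by
          rw [← h, tsig γ']
        simpa using (sig γ').2.2.1 h2
      have htγ : t γ = m := by
        have h := compat_t (sig γ') γ
        rw [hγ, δ.2.2] at h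
        have h2 : t ((sig γ').1 (t γ)) = t ((sig γ').1 m) := by
          rw [← h, tsig γ']
        simpa using (sig γ').2.2.1 h2
      exact ⟨⟨γ, hsγ, htγ⟩, Subtype.ext hγ⟩
  · -- self-distributivity
    intro x y z
    have hρbis : IsBisection s t
        (fun m' => act (sig x) ((sig y).1
          (@Function.invFun M M ⟨m'⟩ (t ∘ (sig x).1) m'))) := by
      constructor
      · funext m'
        show s (act (sig x) ((sig y).1 _)) = m'
        rw [compat_s, hsid (sig y), hinvfun (sig x) m']
      · have heq : (t ∘ fun m' => act (sig x) ((sig y).1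
            (@Function.invFun M M ⟨m'⟩ (t ∘ (sig x).1) m')))
            = (t ∘ (sig x).1) ∘ ((t ∘ (sig y).1) ∘
              fun m' => @Function.invFun M M ⟨m'⟩ (t ∘ (sig x).1) m') := by
          funext m'
          show t (act (sig x) ((sig y).1 _)) = _
          rw [compat_t]
          rfl
        rw [heq]
        refine (sig x).2.2.comp ((sig y).2.2.comp ?_)
        have hinst : (fun m' => @Function.invFun M M ⟨m'⟩ (t ∘ (sig x).1) m')
            = @Function.invFun M M ⟨m⟩ (t ∘ (sig x).1) := by
          funext m'
          have h := (sig x).2.2.2 m'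
          simp only [Function.invFun, dif_pos h]
        rw [hinst]
        exact Function.bijective_iff_has_inverse.mpr
          ⟨t ∘ (sig x).1, Function.rightInverse_invFun (sig x).2.2.2,
            Function.leftInverse_invFun (sig x).2.2.1⟩
    set ρ : {σ : M → Γ // IsBisection s t σ} := ⟨_, hρbis⟩ with hρ
    have hinvm : @Function.invFun M M ⟨m⟩ (t ∘ (sig x).1) m = m := by
      apply (sig x).2.2.1
      show t ((sig x).1 _) = t ((sig x).1 m)
      rw [hinvfun (sig x) m, hsig, x.2.2]
    have hρm : ρ.1 m = act (sig x) y.1 := by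
      show act (sig x) ((sig y).1 _) = act (sig x) y.1
      rw [hinvm, hsig]
    have hsd := selfdist (sig x) (sig y) ρ (fun _ => rfl) z.1
    have hxy : (sig ⟨act (sig x) y.1, mem (sig x) (tsig x) y⟩).1 m = ρ.1 m := by
      rw [hsig, hρm]
    apply Subtype.ext
    show act (sig x) (act (sig y) z.1) = act (sig _) (act (sig x) z.1)
    rw [hsd]
    exact (indep (sig ⟨act (sig x) y.1, mem (sig x) (tsig x) y⟩) ρ hxy
      (by rw [hsig]; exact (mem (sig x) (tsig x) y).1)
      (by rw [hsig]; exact (mem (sig x) (tsig x) y).2) (act (sig x) z.1)).symm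
end

section
/- For every t ∈ ℝ, the operation on ℝ⁴ defined by (a₁,a₂,a₃,a₄) ▷_t (b₁,b₂,b₃,b₄) := (b₁, b₂, b₃, t a₁b₁ + t a₂b₂ + t a₃b₃ + a₁b₂ − a₂b₁ + b₄) is a pointed rack structure: for every a ∈ ℝ⁴ the map b ↦ a ▷_t b is a bijection of ℝ⁴, the self-distributivity law a ▷_t (b ▷_t c) = (a ▷_t b) ▷_t (a ▷_t c) holds for all a, b, c ∈ ℝ⁴, and the origin 0 is a unit: 0 ▷_t b = b and a ▷_t 0 = 0 for all a, b ∈ ℝ⁴. -/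
/-- The rack operation `▷_t` on `ℝ⁴`. -/
def rackOp (t : ℝ) (a b : ℝ × ℝ × ℝ × ℝ) : ℝ × ℝ × ℝ × ℝ :=
  (b.1, b.2.1, b.2.2.1,
    t * a.1 * b.1 + t * a.2.1 * b.2.1 + t * a.2.2.1 * b.2.2.1
      + a.1 * b.2.1 - a.2.1 * b.1 + b.2.2.2)

/-- For every `t`, `▷_t` is a pointed rack structure on `ℝ⁴`: left translations are
bijections, self-distributivity holds, and `0` is a unit. -/
theorem rackOp_pointed_rack (t : ℝ) :
    (∀ a : ℝ × ℝ × ℝ × ℝ, Function.Bijective (rackOp t a)) ∧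
    (∀ a b c : ℝ × ℝ × ℝ × ℝ,
      rackOp t a (rackOp t b c) = rackOp t (rackOp t a b) (rackOp t a c)) ∧
    (∀ b : ℝ × ℝ × ℝ × ℝ, rackOp t 0 b = b) ∧
    (∀ a : ℝ × ℝ × ℝ × ℝ, rackOp t a 0 = 0) := by
  refine ⟨fun a => ?_, fun a b c => ?_, fun b => ?_, fun a => ?_⟩
  · refine Function.bijective_iff_has_inverse.mpr
      ⟨fun b => (b.1, b.2.1, b.2.2.1,
        b.2.2.2 - (t * a.1 * b.1 + t * a.2.1 * b.2.1 + t * a.2.2.1 * b.2.2.1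
          + a.1 * b.2.1 - a.2.1 * b.1)), fun b => ?_, fun b => ?_⟩ <;>
    simp [rackOp] <;> ring
  · simp [rackOp]; ring
  · simp [rackOp]
  · simp [rackOp]
end

section
/- For every t ≠ 0 there is no rack isomorphism between (ℝ⁴, ▷_t) and (ℝ⁴, ▷_0); that is, there is no bijection f : ℝ⁴ → ℝ⁴ satisfying f(a ▷_t b) = f(a) ▷_0 f(b) for all a, b ∈ ℝ⁴. Indeed a ▷_0 a = a for all a ∈ ℝ⁴, while for t ≠ 0 there exists a ∈ ℝ⁴ with a ▷_t a ≠ a. Consequently the bundle of Lie racks (ℝ⁴ × ℝ, ▷_t) over ℝ is not isomorphic to a trivial bundle of racks. -/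
/-- For `t ≠ 0` the racks `(ℝ⁴, ▷_t)` and `(ℝ⁴, ▷_0)` are not isomorphic: indeed,
`a ▷₀ a = a` always, while for `t ≠ 0` some `a` has `a ▷_t a ≠ a`; in particular
there is no bijection `f` with `f (a ▷_t b) = f a ▷₀ f b`. Hence the bundle of
Lie racks `(ℝ⁴ × ℝ, ▷_t)` over `ℝ` is non-trivial. -/
theorem rackOp_t_not_isomorphic_to_rackOp_zero :
    (∀ a : ℝ × ℝ × ℝ × ℝ, rackOp 0 a a = a) ∧
    (∀ t : ℝ, t ≠ 0 →
      (∃ a : ℝ × ℝ × ℝ × ℝ, rackOp t a a ≠ a) ∧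
      ¬ ∃ f : (ℝ × ℝ × ℝ × ℝ) → (ℝ × ℝ × ℝ × ℝ),
          Function.Bijective f ∧
          ∀ a b : ℝ × ℝ × ℝ × ℝ, f (rackOp t a b) = rackOp 0 (f a) (f b)) := by
  have hfix : ∀ a : ℝ × ℝ × ℝ × ℝ, rackOp 0 a a = a := by
    intro ⟨a1, a2, a3, a4⟩
    simp [rackOp]; ring
  refine ⟨hfix, fun t ht => ?_⟩
  have hwit : rackOp t (1, 0, 0, 0) (1, 0, 0, 0) ≠ (1, 0, 0, 0) := by
    simp [rackOp, Prod.ext_iff, ht]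
  refine ⟨⟨(1, 0, 0, 0), hwit⟩, ?_⟩
  rintro ⟨f, hbij, hmorph⟩
  apply hwit
  apply hbij.injective
  rw [hmorph, hfix]
end

section
/- For all t ∈ ℝ and a, b ∈ ℝ⁴, the mixed second derivative at (0,0) of the map (s, u) ↦ (s•a) ▷_t (u•b) equals the Leibniz bracket [a,b]_t; precisely, the derivative at s = 0 of the function s ↦ (d/du)|_{u=0} ((s•a) ▷_t (u•b)) equals (0,0,0, t a₁b₁ + t a₂b₂ + t a₃b₃ + a₁b₂ − a₂b₁) = [a,b]_t. (The Lie rack ▷_t integrates the Leibniz algebra 𝔤_t.) -/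
/-- The bracket `[·,·]_t` on `ℝ⁴`. -/
def leibnizBracket (t : ℝ) (X Y : ℝ × ℝ × ℝ × ℝ) : ℝ × ℝ × ℝ × ℝ :=
  (0, 0, 0,
    t * X.1 * Y.1 + X.1 * Y.2.1 - X.2.1 * Y.1 + t * X.2.1 * Y.2.1
      + t * X.2.2.1 * Y.2.2.1)

/-- The mixed second derivative at `(0,0)` of `(s, u) ↦ (s • a) ▷_t (u • b)` equals
`(0,0,0, t a₁b₁ + t a₂b₂ + t a₃b₃ + a₁b₂ − a₂b₁) = [a,b]_t`: the Lie rack `▷_t`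
integrates the Leibniz algebra `𝔤_t`. -/
theorem rackOp_differentiates_to_leibnizBracket (t : ℝ) (a b : ℝ × ℝ × ℝ × ℝ) :
    deriv (fun s : ℝ => deriv (fun u : ℝ => rackOp t (s • a) (u • b)) 0) 0
      = (0, 0, 0,
          t * a.1 * b.1 + t * a.2.1 * b.2.1 + t * a.2.2.1 * b.2.2.1
            + a.1 * b.2.1 - a.2.1 * b.1) ∧
    ((0, 0, 0,
        t * a.1 * b.1 + t * a.2.1 * b.2.1 + t * a.2.2.1 * b.2.2.1
          + a.1 * b.2.1 - a.2.1 * b.1) : ℝ × ℝ × ℝ × ℝ)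
      = leibnizBracket t a b := by
  constructor
  · -- the value V s of the inner derivative
    set V : ℝ → ℝ × ℝ × ℝ × ℝ := fun s =>
      (b.1, b.2.1, b.2.2.1,
        t * (s * a.1) * b.1 + t * (s * a.2.1) * b.2.1 + t * (s * a.2.2.1) * b.2.2.1
          + (s * a.1) * b.2.1 - (s * a.2.1) * b.1 + b.2.2.2) with hV
    have hinner : ∀ s : ℝ, deriv (fun u : ℝ => rackOp t (s • a) (u • b)) 0 = V s := by
      intro s
      have hfun : (fun u : ℝ => rackOp t (s • a) (u • b)) = fun u : ℝ => u • V s := by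
        funext u
        simp only [rackOp, hV, Prod.smul_mk, Prod.smul_fst, Prod.smul_snd, smul_eq_mul,
          Prod.mk.injEq, true_and]
        ring
      rw [hfun]
      have : HasDerivAt (fun u : ℝ => u • V s) (V s) 0 := by
        simpa using (hasDerivAt_id (0 : ℝ)).smul_const (V s)
      exact this.deriv
    simp only [hinner]
    set W : ℝ × ℝ × ℝ × ℝ :=
      (0, 0, 0,
        t * a.1 * b.1 + t * a.2.1 * b.2.1 + t * a.2.2.1 * b.2.2.1
          + a.1 * b.2.1 - a.2.1 * b.1) with hW
    have hVW : V = fun s : ℝ => s • W + (b.1, b.2.1, b.2.2.1, b.2.2.2) := by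
      funext s
      simp only [hV, hW, Prod.smul_mk, Prod.mk_add_mk, smul_eq_mul, Prod.mk.injEq]
      refine ⟨by ring, by ring, by ring, by ring⟩
    rw [hVW]
    have : HasDerivAt (fun s : ℝ => s • W + (b.1, b.2.1, b.2.2.1, b.2.2.2)) W 0 := by
      simpa using ((hasDerivAt_id (0 : ℝ)).smul_const W).add_const (b.1, b.2.1, b.2.2.1, b.2.2.2)
    exact this.deriv
  · simp only [leibnizBracket, Prod.mk.injEq, true_and]
    ring
end
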